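/- For nonnegative integers a, b, c, d: ∑_{k=d}^{min(b, c+d)} q^{(b-k)(c+d-k)} · C_q(b, k) · C_q(c, k−d) · C_q(a+k, b+c) = C_q(a, b−d) · C_q(a+d, c+d). -/

import Mathlib

open Finset

noncomputable def qPoch (q a : RatFunc ℚ) (n : ℕ) : RatFunc ℚ :=
  ∏ j ∈ Finset.range n, (1 - a * q ^ j)

noncomputable def qBinom (q : RatFunc ℚ) (m k : ℤ) : RatFunc ℚ :=
  if 0 ≤ k ∧ k ≤ m then
    qPoch q q m.toNat / (qPoch q q k.toNat * qPoch q q (m - k).toNat)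
  else 0

noncomputable abbrev QQ : RatFunc ℚ := RatFunc.X
noncomputable abbrev P (n : ℕ) : RatFunc ℚ := qPoch QQ QQ n
noncomputable abbrev B (m k : ℤ) : RatFunc ℚ := qBinom QQ m k

lemma X_pow_ne_one (j : ℕ) : (QQ)^(j+1) ≠ 1 := by
  intro h
  have hinj := IsFractionRing.injective (Polynomial ℚ) (RatFunc ℚ)
  rw [QQ, RatFunc.X, ← map_pow, ← map_one (algebraMap (Polynomial ℚ) (RatFunc ℚ))] at h
  have h2 := hinj h
  have := Polynomial.natDegree_X_pow (R := ℚ) (j+1)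
  rw [h2] at this
  simp at this

lemma P_ne_zero (n : ℕ) : P n ≠ 0 := by
  rw [P, qPoch]
  apply Finset.prod_ne_zero_iff.2
  intro j _
  intro h
  apply X_pow_ne_one j
  have : QQ * QQ ^ j = 1 := by linear_combination -h
  rw [pow_succ, mul_comm]
  exact this

lemma P_succ (n : ℕ) : P (n+1) = P n * (1 - QQ^(n+1)) := by
  rw [P, P, qPoch, qPoch, Finset.prod_range_succ, pow_succ, mul_comm QQ (QQ^n)]

lemma B_of_neg {m k : ℤ} (h : k < 0) : B m k = 0 := by
  rw [B, qBinom, if_neg]; rintro ⟨h1, -⟩; omega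

lemma B_of_gt {m k : ℤ} (h : m < k) : B m k = 0 := by
  rw [B, qBinom, if_neg]; rintro ⟨-, h2⟩; omega

lemma B_nat (m k : ℕ) (h : k ≤ m) : B m k = P m / (P k * P (m - k)) := by
  rw [B, qBinom, if_pos]
  · rw [show ((m:ℤ) - k) = ((m - k : ℕ):ℤ) by omega]
    norm_num
  · constructor <;> [positivity; exact_mod_cast h]

lemma B_zero (m : ℤ) (h : 0 ≤ m) : B m 0 = 1 := by
  obtain ⟨n, rfl⟩ := Int.eq_ofNat_of_zero_le h
  rw [show ((0:ℤ)) = ((0:ℕ):ℤ) by norm_num, B_nat n 0 (Nat.zero_le n)]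
  simp [P, qPoch]
  exact P_ne_zero n

lemma B_self (m : ℤ) (h : 0 ≤ m) : B m m = 1 := by
  obtain ⟨n, rfl⟩ := Int.eq_ofNat_of_zero_le h
  rw [B_nat n n le_rfl]
  simp [P, qPoch]
  exact P_ne_zero n

lemma B_symm (m : ℕ) (k : ℤ) : B m k = B m (m - k) := by
  rcases lt_or_ge k 0 with h | h
  · rw [B_of_neg h, B_of_gt (by omega), ]
  rcases lt_or_ge (m:ℤ) k with h2 | h2
  · rw [B_of_gt h2, B_of_neg (by omega)]
  obtain ⟨j, rfl⟩ := Int.eq_ofNat_of_zero_le h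
  have hj : j ≤ m := by exact_mod_cast h2
  rw [B_nat m j hj, show ((m:ℤ) - j) = ((m - j : ℕ) : ℤ) by push_cast [Nat.cast_sub hj]; ring,
    B_nat m (m-j) (Nat.sub_le m j), show m - (m - j) = j by omega, mul_comm]

lemma one_sub_q_pow_ne (n : ℕ) : (1 : RatFunc ℚ) - QQ^(n+1) ≠ 0 := by
  intro h; apply X_pow_ne_one n; linear_combination -h

lemma QQ_ne_zero : QQ ≠ 0 := RatFunc.X_ne_zero

lemma B_pascal (m : ℕ) (k : ℤ) :
    B (m+1) k = QQ ^ ((m:ℤ)+1-k) * B m (k-1) + B m k := by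
  rcases lt_or_ge k 0 with h | h
  · rw [B_of_neg h, B_of_neg (show k-1 < 0 by omega), B_of_neg h]; ring
  rcases h.eq_or_lt with rfl | h0
  · rw [B_zero _ (by positivity), B_of_neg (by norm_num), B_zero _ (by positivity)]; ring
  rcases lt_or_ge ((m:ℤ)+1) k with h2 | h2
  · rw [B_of_gt h2, B_of_gt (show (m:ℤ) < k-1 by omega), B_of_gt (show (m:ℤ) < k by omega)]
    ring
  obtain ⟨kn, rfl⟩ := Int.eq_ofNat_of_zero_le h
  obtain ⟨j, rfl⟩ : ∃ j, kn = j + 1 := ⟨kn - 1, by omega⟩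
  have hjm : j + 1 ≤ m + 1 := by exact_mod_cast h2
  rcases eq_or_lt_of_le hjm with he | hlt
  · -- j = m
    have : j = m := by omega
    subst this
    rw [show ((j:ℤ)+1) = (((j+1:ℕ)):ℤ) by push_cast; ring] at *
    rw [show (((j+1:ℕ)):ℤ) = ((j:ℕ):ℤ)+1 by push_cast; ring, show ((j:ℤ)+1)-1 = (j:ℤ) by ring]
    rw [show ((j:ℤ)+1) = (((j+1:ℕ)):ℤ) by push_cast; ring]
    rw [B_self _ (by positivity), B_self _ (by positivity), B_of_gt (by exact_mod_cast by omega)]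
    norm_num
  · -- j + 1 ≤ m : write m = j + 1 + u
    obtain ⟨u, rfl⟩ : ∃ u, m = j + 1 + u := ⟨m - (j+1), by omega⟩
    have e1 : ((j+1+u:ℕ):ℤ) + 1 = ((j+1+u+1:ℕ):ℤ) := by push_cast; ring
    have e2 : ((j+1:ℕ):ℤ) - 1 = ((j:ℕ):ℤ) := by push_cast; ring
    rw [e1, e2, B_nat _ _ (by omega), B_nat _ _ (by omega), B_nat _ _ (by omega)]
    rw [show j+1+u+1 - (j+1) = u+1 by omega, show j+1+u - j = u+1 by omega,
        show j+1+u - (j+1) = u by omega]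
    rw [show ((j+1+u+1:ℕ):ℤ) - ((j+1:ℕ):ℤ) = ((u+1:ℕ):ℤ) by push_cast; ring, zpow_natCast]
    rw [P_succ (j+1+u), P_succ j, P_succ u]
    have h1 := P_ne_zero j
    have h2 := P_ne_zero u
    have h3 := P_ne_zero (j+1+u)
    have h4 := one_sub_q_pow_ne j
    have h5 := one_sub_q_pow_ne u
    have h6 := one_sub_q_pow_ne (j+1+u)
    field_simp
    ring

lemma B_trinomial (m k j : ℤ) : B m k * B k j = B m j * B (m-j) (k-j) := by
  rcases lt_or_ge j 0 with hj | hj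
  · rw [B_of_neg hj, B_of_neg hj]; ring
  rcases lt_or_ge k j with hkj | hkj
  · rw [B_of_gt hkj, B_of_neg (show k-j<0 by omega)]; ring
  rcases lt_or_ge m k with hmk | hmk
  · rw [B_of_gt hmk, B_of_gt (show m-j<k-j by omega)]; ring
  obtain ⟨J, rfl⟩ := Int.eq_ofNat_of_zero_le hj
  obtain ⟨K, rfl⟩ := Int.eq_ofNat_of_zero_le (le_trans hj hkj)
  obtain ⟨M, rfl⟩ := Int.eq_ofNat_of_zero_le (by omega : (0:ℤ) ≤ m)
  have hJK : J ≤ K := by exact_mod_cast hkj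
  have hKM : K ≤ M := by exact_mod_cast hmk
  rw [B_nat M K hKM, B_nat K J hJK, B_nat M J (hJK.trans hKM),
      show ((M:ℤ) - J) = ((M-J:ℕ):ℤ) by omega, show ((K:ℤ) - J) = ((K-J:ℕ):ℤ) by omega,
      B_nat (M-J) (K-J) (by omega), show M-J-(K-J) = M-K by omega]
  have h1 := P_ne_zero J
  have h2 := P_ne_zero K
  have h3 := P_ne_zero (M-K)
  have h4 := P_ne_zero (K-J)
  have h5 := P_ne_zero (M-J)
  field_simp

lemma zpow_helper (a b c d : ℤ) (x y : RatFunc ℚ) (h : a + b = c + d) :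
    QQ^a * (QQ^b * x * y) = QQ^c * x * (QQ^d * y) := by
  calc QQ^a * (QQ^b * x * y) = QQ^(a+b) * (x*y) := by
        rw [zpow_add₀ QQ_ne_zero]; ring
    _ = QQ^(c+d) * (x*y) := by rw [h]
    _ = QQ^c * x * (QQ^d * y) := by rw [zpow_add₀ QQ_ne_zero]; ring

lemma B_zero_top (s : ℤ) : B 0 s = if s = 0 then 1 else 0 := by
  rcases lt_trichotomy s 0 with h | rfl | h
  · rw [B_of_neg h, if_neg (by omega)]
  · rw [if_pos rfl]; exact B_zero 0 le_rfl
  · rw [B_of_gt h, if_neg (by omega)]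

lemma B_vandermonde (M N : ℕ) (t : ℤ) :
    B (M+N) t = ∑ j ∈ range (M+1), QQ ^ (((M:ℤ)-j)*(t-j)) * B M j * B N (t-j) := by
  induction N generalizing t with
  | zero =>
    simp only [Nat.cast_zero, add_zero]
    rcases le_or_gt 0 t with ht | ht
    · rcases le_or_gt t (M:ℤ) with htM | htM
      · obtain ⟨T, rfl⟩ := Int.eq_ofNat_of_zero_le ht
        have hTM : T ≤ M := by exact_mod_cast htM
        rw [Finset.sum_eq_single T]
        · simp [B_zero_top, B_self]
        · intro j hj hne
          have hne' : ((T:ℤ) - (j:ℤ)) ≠ 0 := by omega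
          rw [B_zero_top, if_neg hne']
          ring
        · intro h; exact absurd (Finset.mem_range.2 (by omega)) h
      · rw [B_of_gt htM, Finset.sum_eq_zero]
        intro j hj
        have : (0:ℤ) < t - j := by
          have := Finset.mem_range.1 hj; omega
        rw [B_zero_top, if_neg (by omega)]; ring
    · rw [B_of_neg ht, Finset.sum_eq_zero]
      intro j hj
      rw [B_zero_top, if_neg (by omega)]; ring
  | succ n ih =>
    rw [show ((M:ℤ) + ((n+1:ℕ):ℤ)) = ((M+n:ℕ):ℤ)+1 by push_cast; ring, B_pascal (M+n) t,
        show ((M+n:ℕ):ℤ) = (M:ℤ)+(n:ℤ) by push_cast; ring,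
        ih (t-1), ih t, Finset.mul_sum, ← Finset.sum_add_distrib]
    apply Finset.sum_congr rfl
    intro j hj
    rw [show ((n+1:ℕ):ℤ) = ((n:ℕ):ℤ)+1 by push_cast; ring, B_pascal n (t-j),
        show t - 1 - (j:ℤ) = t - j - 1 by ring, mul_add]
    congr 1
    exact zpow_helper _ _ _ _ _ _ (by ring)

theorem q_bizley_one (a b c d : ℕ) :
    ∑ k ∈ Finset.Icc d (min b (c + d)),
      (RatFunc.X : RatFunc ℚ) ^ (((b : ℤ) - k) * ((c : ℤ) + d - k)) *
        qBinom RatFunc.X (b : ℤ) (k : ℤ) *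
        qBinom RatFunc.X (c : ℤ) ((k : ℤ) - d) *
        qBinom RatFunc.X ((a : ℤ) + k) ((b : ℤ) + c)
    = qBinom RatFunc.X (a : ℤ) ((b : ℤ) - d) *
        qBinom RatFunc.X ((a : ℤ) + d) ((c : ℤ) + d) := by
  show
    ∑ k ∈ Finset.Icc d (min b (c + d)),
      QQ ^ (((b : ℤ) - k) * ((c : ℤ) + d - k)) * B (b:ℤ) (k:ℤ) * B (c:ℤ) ((k:ℤ) - d) *
        B ((a:ℤ) + k) ((b:ℤ) + c)
      = B (a:ℤ) ((b:ℤ) - d) * B ((a:ℤ) + d) ((c:ℤ) + d)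
  rcases lt_or_ge a c with hac | hca
  · rw [B_of_gt (show ((a:ℤ)+d) < (c:ℤ)+d by omega), mul_zero]
    apply Finset.sum_eq_zero
    intro k hk
    rw [Finset.mem_Icc] at hk
    have hkb : k ≤ b := le_trans hk.2 (min_le_left _ _)
    rw [B_of_gt (show ((a:ℤ)+k) < (b:ℤ)+c by omega)]
    ring
  calc
    ∑ k ∈ Finset.Icc d (min b (c + d)),
        QQ ^ (((b:ℤ) - k) * ((c:ℤ) + d - k)) * B (b:ℤ) (k:ℤ) * B (c:ℤ) ((k:ℤ) - d) *
          B ((a:ℤ) + k) ((b:ℤ) + c)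
        = ∑ k ∈ Finset.Icc d (c + d),
            QQ ^ (((b:ℤ) - k) * ((c:ℤ) + d - k)) * B (b:ℤ) (k:ℤ) * B (c:ℤ) ((k:ℤ) - d) *
              B ((a:ℤ) + k) ((b:ℤ) + c) := by
      apply Finset.sum_subset (Finset.Icc_subset_Icc_right (min_le_right _ _))
      intro k hk hk2
      rw [Finset.mem_Icc] at hk hk2
      rw [B_of_gt (show (b:ℤ) < (k:ℤ) by omega)]
      ring
    _ = ∑ k ∈ Finset.Icc d (c + d), ∑ j ∈ Finset.range (a+d+1),
          QQ ^ (((a:ℤ)+d-j)*((b:ℤ)+c-j)) * B ((a:ℤ)+d) (j:ℤ) * B (c:ℤ) ((b:ℤ)+c-j) *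
            (QQ ^ (((b:ℤ)-k)*((c:ℤ)+d-k)) * B (b:ℤ) (k:ℤ) * B ((j:ℤ)-b) ((c:ℤ)+d-k)) := by
      apply Finset.sum_congr rfl
      intro k hk
      rw [Finset.mem_Icc] at hk
      rw [show ((a:ℤ)+k) = (((a+d:ℕ)):ℤ) + (((k-d:ℕ)):ℤ) by omega,
          B_vandermonde (a+d) (k-d) ((b:ℤ)+c), Finset.mul_sum]
      push_cast [Nat.cast_sub hk.1]
      apply Finset.sum_congr rfl
      intro j hj
      have htri := B_trinomial (c:ℤ) ((k:ℤ)-d) ((b:ℤ)+c-j)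
      rw [show (c:ℤ)-((b:ℤ)+c-j) = (j:ℤ)-b by ring] at htri
      rcases lt_or_ge j b with hjb | hbj
      · rw [B_of_gt (show ((k:ℤ)-d) < (b:ℤ)+c-j by omega),
            B_of_gt (show (c:ℤ) < (b:ℤ)+c-j by omega)]
        ring
      · have hsym := B_symm (j-b) ((k:ℤ)-d-((b:ℤ)+c-j))
        rw [Nat.cast_sub hbj] at hsym
        rw [show (j:ℤ)-b-((k:ℤ)-d-((b:ℤ)+c-j)) = (c:ℤ)+d-k by ring] at hsym
        rw [hsym] at htri
        linear_combination (QQ ^ (((b:ℤ)-k)*((c:ℤ)+d-k)) * B (b:ℤ) (k:ℤ) *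
          (QQ ^ (((a:ℤ)+d-j)*((b:ℤ)+c-j)) * B ((a:ℤ)+d) (j:ℤ))) * htri
    _ = ∑ j ∈ Finset.range (a+d+1), ∑ k ∈ Finset.Icc d (c+d),
          QQ ^ (((a:ℤ)+d-j)*((b:ℤ)+c-j)) * B ((a:ℤ)+d) (j:ℤ) * B (c:ℤ) ((b:ℤ)+c-j) *
            (QQ ^ (((b:ℤ)-k)*((c:ℤ)+d-k)) * B (b:ℤ) (k:ℤ) * B ((j:ℤ)-b) ((c:ℤ)+d-k)) :=
      Finset.sum_comm
    _ = ∑ j ∈ Finset.range (a+d+1), B ((a:ℤ)+d) ((c:ℤ)+d) *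
          (QQ ^ (((a:ℤ)+d-j)*((b:ℤ)+c-j)) * B ((a:ℤ)-c) ((j:ℤ)-((c:ℤ)+d)) *
            B (c:ℤ) ((b:ℤ)+c-j)) := by
      apply Finset.sum_congr rfl
      intro j hj
      rcases lt_or_ge j b with hjb | hbj
      · have hz : B (c:ℤ) ((b:ℤ)+c-j) = 0 := B_of_gt (by omega)
        simp only [hz, mul_zero, zero_mul, Finset.sum_const_zero]
      rcases lt_or_ge (b+c) j with hjbc | hjbc
      · have hz : B (c:ℤ) ((b:ℤ)+c-j) = 0 := B_of_neg (by omega)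
        simp only [hz, mul_zero, zero_mul, Finset.sum_const_zero]
      · rw [← Finset.mul_sum]
        have hv := B_vandermonde b (j-b) ((c:ℤ)+(d:ℤ))
        rw [Nat.cast_sub hbj, show ((b:ℤ)+((j:ℤ)-b)) = (j:ℤ) by ring] at hv
        have e1 : ∑ k ∈ Finset.Icc d (c+d),
            QQ ^ (((b:ℤ)-k)*((c:ℤ)+d-k)) * B (b:ℤ) (k:ℤ) * B ((j:ℤ)-b) ((c:ℤ)+d-k)
            = ∑ k ∈ Finset.range (b+c+d+1),
            QQ ^ (((b:ℤ)-k)*((c:ℤ)+d-k)) * B (b:ℤ) (k:ℤ) * B ((j:ℤ)-b) ((c:ℤ)+d-k) := by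
          apply Finset.sum_subset
          · intro x hx
            rw [Finset.mem_Icc] at hx
            rw [Finset.mem_range]
            omega
          · intro k hk hk2
            rw [Finset.mem_range] at hk
            rw [Finset.mem_Icc] at hk2
            rcases lt_or_ge (c+d) k with h | h
            · rw [B_of_neg (show (c:ℤ)+d-(k:ℤ) < 0 by omega)]; ring
            · rw [B_of_gt (show (j:ℤ)-b < (c:ℤ)+d-k by omega)]; ring
        have e2 : ∑ k ∈ Finset.range (b+1),
            QQ ^ (((b:ℤ)-k)*((c:ℤ)+d-k)) * B (b:ℤ) (k:ℤ) * B ((j:ℤ)-b) ((c:ℤ)+d-k)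
            = ∑ k ∈ Finset.range (b+c+d+1),
            QQ ^ (((b:ℤ)-k)*((c:ℤ)+d-k)) * B (b:ℤ) (k:ℤ) * B ((j:ℤ)-b) ((c:ℤ)+d-k) := by
          apply Finset.sum_subset (Finset.range_subset_range.2 (by omega))
          intro k hk hk2
          rw [Finset.mem_range] at hk hk2
          rw [B_of_gt (show (b:ℤ) < (k:ℤ) by omega)]
          ring
        rw [e1, ← e2, ← hv]
        have htri := B_trinomial ((a:ℤ)+d) (j:ℤ) ((c:ℤ)+d)
        rw [show ((a:ℤ)+d-((c:ℤ)+d)) = (a:ℤ)-c by ring] at htri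
        linear_combination (QQ ^ (((a:ℤ)+d-j)*((b:ℤ)+c-j)) * B (c:ℤ) ((b:ℤ)+c-j)) * htri
    _ = B ((a:ℤ)+d) ((c:ℤ)+d) * ∑ j ∈ Finset.Icc (c+d) (a+d),
          (QQ ^ (((a:ℤ)+d-j)*((b:ℤ)+c-j)) * B ((a:ℤ)-c) ((j:ℤ)-((c:ℤ)+d)) *
            B (c:ℤ) ((b:ℤ)+c-j)) := by
      rw [← Finset.mul_sum]
      congr 1
      refine (Finset.sum_subset ?_ ?_).symm
      · intro x hx
        rw [Finset.mem_Icc] at hx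
        rw [Finset.mem_range]
        omega
      · intro j hj hj2
        rw [Finset.mem_range] at hj
        rw [Finset.mem_Icc] at hj2
        rw [B_of_neg (show (j:ℤ)-((c:ℤ)+d) < 0 by omega)]
        ring
    _ = B ((a:ℤ)+d) ((c:ℤ)+d) * B (a:ℤ) ((b:ℤ)-d) := by
      congr 1
      rw [← Finset.Ico_add_one_right_eq_Icc, Finset.sum_Ico_eq_sum_range, show a+d+1-(c+d) = a-c+1 by omega]
      have hv := B_vandermonde (a-c) c ((b:ℤ)-(d:ℤ))
      rw [show (((a-c:ℕ)):ℤ) = (a:ℤ)-c by omega, show ((a:ℤ)-c+(c:ℤ)) = (a:ℤ) by ring] at hv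
      rw [hv]
      apply Finset.sum_congr rfl
      intro i hi
      rw [show ((c+d+i:ℕ):ℤ) = (c:ℤ)+d+i by push_cast; ring,
          show ((a:ℤ)+d-((c:ℤ)+d+i))*((b:ℤ)+c-((c:ℤ)+d+i)) = ((a:ℤ)-c-i)*((b:ℤ)-d-i) by ring,
          show (c:ℤ)+d+i-((c:ℤ)+d) = (i:ℤ) by ring,
          show (b:ℤ)+c-((c:ℤ)+d+i) = (b:ℤ)-d-(i:ℤ) by ring]
    _ = B (a:ℤ) ((b:ℤ)-d) * B ((a:ℤ)+d) ((c:ℤ)+d) := mul_comm _ _
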